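/- Let M > 0 and fix coordinate indices μ, ν ∈ {1,2,3,4}. Then q ↦ q_μ q_ν/(‖q‖²+M²)⁴ is Lebesgue integrable on ℝ⁴ and ∫_{ℝ⁴} q_μ q_ν dq/(‖q‖²+M²)⁴ = δ_{μν} π²/(12M²), where δ_{μν} = 1 if μ = ν and 0 otherwise. -/

import Mathlib

open MeasureTheory Real Filter Set Topology

section AuxPropagator4

noncomputable abbrev AuxE4 := EuclideanSpace ℝ (Fin 4)

private lemma aux_deriv_prop4 (M : ℝ) (hM : 0 < M) (y : ℝ) :
    HasDerivAt (fun y : ℝ =>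
      (-((y^2+M^2)⁻¹) + M^2*(((y^2+M^2)^2)⁻¹) - (M^4/3)*(((y^2+M^2)^3)⁻¹))/2)
      (y^5/(y^2+M^2)^4) y := by
  have hu : (0:ℝ) < y^2 + M^2 := by positivity
  have h1 : HasDerivAt (fun y : ℝ => y^2 + M^2) (2*y) y := by
    simpa using (hasDerivAt_pow 2 y).add_const (M^2)
  have ha := h1.inv hu.ne'
  have hb := ((h1.pow 2).inv (pow_ne_zero 2 hu.ne')).const_mul (M^2)
  have hc := ((h1.pow 3).inv (pow_ne_zero 3 hu.ne')).const_mul (M^4/3)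
  have := ((ha.neg.add hb).sub hc).div_const 2
  refine this.congr_deriv ?_
  simp only [Pi.pow_apply]
  field_simp
  ring

private lemma aux_int_prop4 (M : ℝ) (hM : 0 < M) :
    IntegrableOn (fun y : ℝ => y^5/(y^2+M^2)^4) (Ioi 0) ∧
    ∫ y in Ioi (0:ℝ), y^5/(y^2+M^2)^4 = 1/(6*M^2) := by
  set g : ℝ → ℝ := fun y =>
      (-((y^2+M^2)⁻¹) + M^2*(((y^2+M^2)^2)⁻¹) - (M^4/3)*(((y^2+M^2)^3)⁻¹))/2 with hg
  have hderiv : ∀ y ∈ Ici (0:ℝ), HasDerivAt g (y^5/(y^2+M^2)^4) y :=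
    fun y _ => aux_deriv_prop4 M hM y
  have hpos : ∀ y ∈ Ioi (0:ℝ), 0 ≤ y^5/(y^2+M^2)^4 := by
    intro y hy
    have : (0:ℝ) < y := hy
    positivity
  have htt : Tendsto (fun y : ℝ => y^2 + M^2) atTop atTop :=
    tendsto_atTop_add_const_right _ _ (tendsto_pow_atTop two_ne_zero)
  have hlim : Tendsto g atTop (𝓝 0) := by
    have t1 : Tendsto (fun y : ℝ => ((y^2+M^2))⁻¹) atTop (𝓝 0) := htt.inv_tendsto_atTop
    have t2 : Tendsto (fun y : ℝ => ((y^2+M^2)^2)⁻¹) atTop (𝓝 0) :=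
      (((tendsto_pow_atTop two_ne_zero).comp htt)).inv_tendsto_atTop
    have t3 : Tendsto (fun y : ℝ => ((y^2+M^2)^3)⁻¹) atTop (𝓝 0) :=
      (((tendsto_pow_atTop three_ne_zero).comp htt)).inv_tendsto_atTop
    have := (((t1.neg.add (t2.const_mul (M^2))).sub (t3.const_mul (M^4/3))).div_const 2)
    simpa using this
  have hg0 : g 0 = -(1/(6*M^2)) := by
    simp only [hg]
    norm_num
    field_simp
    ring
  constructor
  · exact integrableOn_Ioi_deriv_of_nonneg' hderiv hpos hlim
  · rw [integral_Ioi_of_hasDerivAt_of_nonneg' hderiv hpos hlim, hg0]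
    ring

private lemma aux_cont_prop4 (M : ℝ) (hM : 0 < M) (f : AuxE4 → ℝ) (hf : Continuous f) :
    Continuous (fun q : AuxE4 => f q/(‖q‖^2+M^2)^4) := by
  apply hf.div (by fun_prop)
  intro q; positivity

private lemma aux_dom_integrable_prop4 (M : ℝ) (hM : 0 < M) :
    Integrable (fun q : AuxE4 => ‖q‖^2/(‖q‖^2+M^2)^4) := by
  set c : ℝ := max 1 (M^2)⁻¹ with hc
  have hc1 : (1:ℝ) ≤ c := le_max_left _ _
  have hcM : (1:ℝ) ≤ c * M^2 := by
    rcases le_total 1 ((M^2)⁻¹) with h | h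
    · rw [hc, max_eq_right h]; rw [inv_mul_cancel₀ (by positivity)]
    · rw [hc, max_eq_left h, one_mul]
      nlinarith [mul_inv_cancel₀ (ne_of_gt (show (0:ℝ) < M^2 by positivity)), pow_pos hM 2]
  have hbound : ∀ q : AuxE4, ‖q‖^2/(‖q‖^2+M^2)^4 ≤ 8*c^4 * (1+‖q‖)^(-(5:ℝ)) := by
    intro q
    set t : ℝ := ‖q‖ with ht
    have ht0 : 0 ≤ t := norm_nonneg q
    have key : t^2 * (1+t)^5 ≤ 8*(1+t^2)^4 := by
      nlinarith [sq_nonneg (t-1), sq_nonneg t, sq_nonneg (t*(t-1)), pow_nonneg ht0 3,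
        pow_nonneg ht0 4, pow_nonneg ht0 5, sq_nonneg (t^2-t), sq_nonneg (t^3-t^2),
        sq_nonneg (t^3 - t), mul_nonneg (mul_nonneg ht0 ht0) (sq_nonneg (t-1)),
        mul_nonneg (mul_nonneg (mul_nonneg ht0 ht0) ht0) (sq_nonneg (t-1)),
        mul_nonneg (pow_nonneg ht0 4) (sq_nonneg (t-1)),
        mul_nonneg (pow_nonneg ht0 3) (sq_nonneg (t-1))]
    have h1t2 : 1 + t^2 ≤ c * (t^2 + M^2) := by nlinarith [sq_nonneg t]
    have hpos1 : (0:ℝ) < (1+t)^5 := by positivity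
    have hpos2 : (0:ℝ) < (t^2+M^2)^4 := by positivity
    have h4 : (1+t^2)^4 ≤ c^4 * (t^2+M^2)^4 := by
      calc (1+t^2)^4 ≤ (c*(t^2+M^2))^4 := by
            apply pow_le_pow_left₀ (by positivity) h1t2
        _ = c^4 * (t^2+M^2)^4 := by rw [mul_pow]
    have hrw : (1+t) ^ (-(5:ℝ)) = ((1+t)^(5:ℕ))⁻¹ := by
      rw [rpow_neg (by positivity), ← rpow_natCast]; norm_num
    rw [hrw]
    have goal2 : t^2/(t^2+M^2)^4 ≤ 8*c^4/(1+t)^5 := by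
      rw [div_le_div_iff₀ hpos2 hpos1]
      nlinarith [key, h4]
    calc t^2/(t^2+M^2)^4 ≤ 8*c^4/(1+t)^5 := goal2
      _ = 8*c^4 * ((1+t)^(5:ℕ))⁻¹ := by rw [div_eq_mul_inv]
  have hi : Integrable (fun q : AuxE4 => 8*c^4 * (1+‖q‖)^(-(5:ℝ))) := by
    apply Integrable.const_mul
    apply integrable_one_add_norm
    rw [finrank_euclideanSpace_fin]; norm_num
  apply hi.mono' ((aux_cont_prop4 M hM _ (by fun_prop)).aestronglyMeasurable)
  filter_upwards with q
  rw [norm_of_nonneg (by positivity)]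
  exact hbound q

private lemma aux_ball_prop4 : (volume (Metric.ball (0:AuxE4) 1)).toReal = π^2/2 := by
  rw [EuclideanSpace.volume_ball]
  have h3 : ((Fintype.card (Fin 4) : ℝ)/2 + 1) = ((2:ℕ) + 1 : ℝ) := by
    simp [Fintype.card_fin]; norm_num
  rw [h3, Real.Gamma_nat_eq_factorial]
  have hsq : Real.sqrt π ^ Fintype.card (Fin 4) = π^2 := by
    rw [Fintype.card_fin, show (4:ℕ) = 2*2 from rfl, pow_mul, Real.sq_sqrt pi_pos.le]
  rw [hsq]
  norm_num [ENNReal.toReal_ofReal (by positivity : (0:ℝ) ≤ π^2/2)]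

private lemma aux_radial_prop4 (M : ℝ) (hM : 0 < M) :
    ∫ q : AuxE4, ‖q‖^2/(‖q‖^2+M^2)^4 = π^2/(3*M^2) := by
  have h := integral_fun_norm_addHaar (volume : Measure AuxE4)
    (fun y : ℝ => y^2/(y^2+M^2)^4)
  rw [finrank_euclideanSpace_fin] at h
  rw [h, measureReal_def, aux_ball_prop4]
  have : ∫ y in Ioi (0:ℝ), y^(4-1) • (y^2/(y^2+M^2)^4) = 1/(6*M^2) := by
    rw [← (aux_int_prop4 M hM).2]
    apply setIntegral_congr_fun measurableSet_Ioi
    intro y hy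
    simp only [smul_eq_mul]
    ring
  rw [this]
  simp only [nsmul_eq_mul, smul_eq_mul]
  field_simp
  ring

private noncomputable def auxNegCoord (μ : Fin 4) : AuxE4 ≃ₗᵢ[ℝ] AuxE4 :=
  .piLpCongrRight 2 (fun i => if i = μ then .neg ℝ else .refl ℝ ℝ)

private lemma auxNegCoord_apply (μ : Fin 4) (q : AuxE4) (i : Fin 4) :
    auxNegCoord μ q i = if i = μ then -(q i) else q i := by
  rw [auxNegCoord, LinearIsometryEquiv.piLpCongrRight_apply]
  by_cases h : i = μ
  · subst h; simp
  · simp [h]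

private noncomputable def auxSwapCoord (μ ν : Fin 4) : AuxE4 ≃ₗᵢ[ℝ] AuxE4 :=
  .piLpCongrLeft 2 ℝ ℝ (Equiv.swap μ ν)

private lemma auxSwapCoord_apply (μ ν : Fin 4) (q : AuxE4) (i : Fin 4) :
    auxSwapCoord μ ν q i = q (Equiv.swap μ ν i) := by
  rw [auxSwapCoord, LinearIsometryEquiv.piLpCongrLeft_apply]
  simp [Equiv.piCongrLeft'_apply, Equiv.symm_swap]

private lemma aux_norm_sq_sum (q : AuxE4) : ‖q‖^2 = ∑ i, q i ^ 2 := by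
  rw [EuclideanSpace.norm_eq, Real.sq_sqrt (by positivity)]
  simp [Real.norm_eq_abs, sq_abs]

private lemma aux_coord_sq_le (q : AuxE4) (i : Fin 4) : q i ^ 2 ≤ ‖q‖^2 := by
  rw [aux_norm_sq_sum]
  exact Finset.single_le_sum (fun j _ => sq_nonneg (q j)) (Finset.mem_univ i)

private lemma aux_abs_mul_le (q : AuxE4) (i j : Fin 4) : |q i * q j| ≤ ‖q‖^2 := by
  rw [abs_mul]
  calc |q i| * |q j| ≤ ‖q‖ * ‖q‖ := by
        apply mul_le_mul ?_ ?_ (abs_nonneg _) (norm_nonneg _) <;>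
        · rw [← Real.sqrt_sq_eq_abs, ← Real.sqrt_sq (norm_nonneg q)]
          exact Real.sqrt_le_sqrt (aux_coord_sq_le q _)
    _ = ‖q‖^2 := (sq ‖q‖).symm

private lemma aux_integrable_prop4 (M : ℝ) (hM : 0 < M) (a b : Fin 4) :
    Integrable (fun q : AuxE4 => q a * q b / (‖q‖ ^ 2 + M ^ 2) ^ 4) := by
  have hcont : Continuous (fun q : AuxE4 => q a * q b) := by
    exact ((EuclideanSpace.proj a).continuous.mul (EuclideanSpace.proj b).continuous)
  apply (aux_dom_integrable_prop4 M hM).mono'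
    ((aux_cont_prop4 M hM _ hcont).aestronglyMeasurable)
  filter_upwards with q
  have hD : (0:ℝ) < (‖q‖^2+M^2)^4 := by positivity
  rw [Real.norm_eq_abs, abs_div, abs_of_pos hD]
  gcongr
  exact aux_abs_mul_le q a b

end AuxPropagator4

/-- Identity (int-q11): `∫_{ℝ⁴} q_μ q_ν dq/(‖q‖²+M²)⁴ = δ_{μν} π²/(12M²)`. -/
theorem integral_one_propagator_fourth_two_coords (M : ℝ) (hM : 0 < M) (μ ν : Fin 4) :
    Integrable (fun q : EuclideanSpace ℝ (Fin 4) =>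
      q μ * q ν / (‖q‖ ^ 2 + M ^ 2) ^ 4) ∧
    ∫ q : EuclideanSpace ℝ (Fin 4), q μ * q ν / (‖q‖ ^ 2 + M ^ 2) ^ 4 =
      (if μ = ν then (1 : ℝ) else 0) * π ^ 2 / (12 * M ^ 2) := by
  refine ⟨aux_integrable_prop4 M hM μ ν, ?_⟩
  rcases eq_or_ne μ ν with h | h
  · subst h
    simp only [if_pos rfl, ite_true, one_mul]
    -- all diagonal integrals are equal
    have hswap : ∀ i : Fin 4,
        (∫ q : AuxE4, q i * q i / (‖q‖ ^ 2 + M ^ 2) ^ 4) =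
        ∫ q : AuxE4, q μ * q μ / (‖q‖ ^ 2 + M ^ 2) ^ 4 := by
      intro i
      have hmp := ((auxSwapCoord μ i).measurePreserving).integral_comp
        (auxSwapCoord μ i).toMeasurableEquiv.measurableEmbedding
        (fun q : AuxE4 => q i * q i / (‖q‖ ^ 2 + M ^ 2) ^ 4)
      rw [← hmp]
      congr 1
      ext q
      rw [auxSwapCoord_apply, Equiv.swap_apply_right, (auxSwapCoord μ i).norm_map]
    have hsum : ∑ i : Fin 4, (∫ q : AuxE4, q i * q i / (‖q‖ ^ 2 + M ^ 2) ^ 4) =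
        π^2/(3*M^2) := by
      rw [← integral_finset_sum _ (fun i _ => aux_integrable_prop4 M hM i i),
        ← aux_radial_prop4 M hM]
      congr 1
      ext q
      rw [aux_norm_sq_sum, Finset.sum_div]
      congr 1
      ext i
      ring
    rw [Finset.sum_congr rfl (fun i _ => hswap i)] at hsum
    simp only [Finset.sum_const, Finset.card_univ, Fintype.card_fin, nsmul_eq_mul,
      Nat.cast_ofNat] at hsum
    have hM2 : M^2 ≠ 0 := by positivity
    field_simp at hsum ⊢
    linarith
  · simp only [if_neg h, zero_mul, zero_div]
    have hmp := ((auxNegCoord μ).measurePreserving).integral_comp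
      (auxNegCoord μ).toMeasurableEquiv.measurableEmbedding
      (fun q : AuxE4 => q μ * q ν / (‖q‖ ^ 2 + M ^ 2) ^ 4)
    have hneg : (∫ q : AuxE4, q μ * q ν / (‖q‖ ^ 2 + M ^ 2) ^ 4) =
        -∫ q : AuxE4, q μ * q ν / (‖q‖ ^ 2 + M ^ 2) ^ 4 := by
      conv_lhs => rw [← hmp]
      rw [← integral_neg]
      congr 1
      ext q
      rw [(auxNegCoord μ).norm_map,
        auxNegCoord_apply, auxNegCoord_apply, if_pos rfl, if_neg (Ne.symm h)]
      ring
    linarith
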